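/- arXiv:2603.26554 — 4 statements merged into one kernel-verified Lean document; each statement's English description precedes it below -/
import Mathlib

section
/- Let h(z) = (3/2)z - (1/2)z³ be the cubic Newton–Schulz map and let h^(k) denote its k-fold iterate. Then for each k ≥ 1, the map z ↦ h^(k)(z)/z is nonincreasing on [0, √3], and for every z ∈ (0, √3), the sequence h^(k)(z) converges to 1 as k → ∞. -/
/-- The cubic Newton–Schulz map. -/
noncomputable def newtonSchulz (z : ℝ) : ℝ := 3/2 * z - 1/2 * z^3

lemma ns_cont : Continuous newtonSchulz := by
  unfold newtonSchulz; fun_prop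

lemma sqrt3_sq : Real.sqrt 3 ^ 2 = 3 := Real.sq_sqrt (by norm_num)

lemma one_le_sqrt3 : (1:ℝ) ≤ Real.sqrt 3 := by
  nlinarith [sqrt3_sq, Real.sqrt_nonneg 3]

lemma ns_mem {z : ℝ} (h0 : 0 ≤ z) (h1 : z ≤ Real.sqrt 3) :
    newtonSchulz z ∈ Set.Icc (0:ℝ) 1 := by
  have hz2 : z ^ 2 ≤ 3 := by nlinarith [sqrt3_sq, Real.sqrt_nonneg 3]
  constructor
  · unfold newtonSchulz; nlinarith
  · unfold newtonSchulz; nlinarith [sq_nonneg (z - 1)]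

lemma iter_mem : ∀ (k : ℕ) {z : ℝ}, 0 ≤ z → z ≤ Real.sqrt 3 →
    newtonSchulz^[k + 1] z ∈ Set.Icc (0:ℝ) 1 := by
  intro k
  induction k with
  | zero => intro z h0 h1; simpa using ns_mem h0 h1
  | succ n ih =>
    intro z h0 h1
    rw [Function.iterate_succ_apply']
    have h := ih h0 h1
    exact ns_mem h.1 (h.2.trans one_le_sqrt3)

lemma hasDerivAt_ns (w : ℝ) : HasDerivAt newtonSchulz (3/2 - 3/2 * w ^ 2) w := by
  have h : HasDerivAt (fun z : ℝ => 3/2 * z - 1/2 * z ^ 3)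
      (3/2 * 1 - 1/2 * (3 * w ^ 2)) w := by
    exact ((hasDerivAt_id w).const_mul (3/2)).sub
      ((hasDerivAt_pow 3 w).const_mul (1/2))
  convert h using 1
  · rfl
  · ring

/-- derivative of the k-th iterate -/
noncomputable def nsD : ℕ → ℝ → ℝ
  | 0, _ => 1
  | k + 1, z => (3/2 - 3/2 * (newtonSchulz^[k] z) ^ 2) * nsD k z

lemma hasDerivAt_iter : ∀ (k : ℕ) (z : ℝ),
    HasDerivAt (newtonSchulz^[k]) (nsD k z) z := by
  intro k
  induction k with
  | zero => intro z; simpa [nsD] using (hasDerivAt_id z)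
  | succ n ih =>
    intro z
    rw [Function.iterate_succ']
    exact (hasDerivAt_ns (newtonSchulz^[n] z)).comp z (ih z)

lemma key : ∀ (k : ℕ) {z : ℝ}, 0 ≤ z → z ≤ Real.sqrt 3 →
    z * nsD (k + 1) z ≤ newtonSchulz^[k + 1] z := by
  intro k
  induction k with
  | zero =>
    intro z h0 h1
    rw [show (0:ℕ)+1 = 1 from rfl, Function.iterate_one]
    simp only [nsD, Function.iterate_zero, id_eq]
    unfold newtonSchulz
    nlinarith [pow_nonneg h0 3]
  | succ n ih =>
    intro z h0 h1
    have hw := iter_mem n h0 h1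
    set w := newtonSchulz^[n + 1] z with hwdef
    have hd : nsD (n + 2) z = (3/2 - 3/2 * w ^ 2) * nsD (n + 1) z := rfl
    have hit : newtonSchulz^[n + 2] z = newtonSchulz w := by
      rw [Function.iterate_succ_apply']
    have hnn : 0 ≤ 3/2 - 3/2 * w ^ 2 := by nlinarith [hw.1, hw.2]
    have h1' : z * nsD (n + 1) z ≤ w := ih h0 h1
    have h2 : (3/2 - 3/2 * w ^ 2) * (z * nsD (n + 1) z) ≤ (3/2 - 3/2 * w ^ 2) * w :=
      mul_le_mul_of_nonneg_left h1' hnn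
    have h3 : (3/2 - 3/2 * w ^ 2) * w ≤ newtonSchulz w := by
      unfold newtonSchulz
      nlinarith [pow_nonneg hw.1 3]
    rw [hd, hit]
    nlinarith
theorem stmt_2 :
    (∀ k : ℕ, 1 ≤ k →
      AntitoneOn (fun z => newtonSchulz^[k] z / z) (Set.Ioc 0 (Real.sqrt 3)))
    ∧ ∀ z ∈ Set.Ioo (0:ℝ) (Real.sqrt 3),
        Filter.Tendsto (fun k => newtonSchulz^[k] z) Filter.atTop (nhds 1) := by
  constructor
  · intro k hk
    obtain ⟨n, rfl⟩ : ∃ n, k = n + 1 := ⟨k - 1, by omega⟩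
    have hcont : Continuous (newtonSchulz^[n + 1]) := ns_cont.iterate _
    apply antitoneOn_of_deriv_nonpos (convex_Ioc _ _)
    · exact (hcont.continuousOn).div continuousOn_id fun z hz => ne_of_gt hz.1
    · intro z hz
      rw [interior_Ioc] at hz
      exact (((hasDerivAt_iter (n + 1) z).div (hasDerivAt_id z)
        (ne_of_gt hz.1)).differentiableAt).differentiableWithinAt
    · intro z hz
      rw [interior_Ioc] at hz
      have hz0 : z ≠ 0 := ne_of_gt hz.1
      have H0 := (hasDerivAt_iter (n + 1) z).div (hasDerivAt_id z) hz0
      have H : HasDerivAt (fun z => newtonSchulz^[n + 1] z / z)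
          ((nsD (n + 1) z * z - newtonSchulz^[n + 1] z * 1) / z ^ 2) z := by
        exact H0
      rw [H.deriv]
      apply div_nonpos_of_nonpos_of_nonneg
      · have := key n (le_of_lt hz.1) (le_of_lt hz.2)
        nlinarith
      · positivity
  · intro z hz
    have hw : newtonSchulz z ∈ Set.Ioc (0:ℝ) 1 := by
      have hz2 : z ^ 2 < 3 := by
        nlinarith [sqrt3_sq, Real.sqrt_nonneg 3, hz.1, hz.2]
      constructor
      · unfold newtonSchulz; nlinarith [hz.1]
      · exact (ns_mem (le_of_lt hz.1) (le_of_lt hz.2)).2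
    set a : ℕ → ℝ := fun k => newtonSchulz^[k] (newtonSchulz z) with ha
    have inv : ∀ k, a k ∈ Set.Icc (0:ℝ) 1 := by
      intro k
      induction k with
      | zero => exact ⟨le_of_lt hw.1, hw.2⟩
      | succ n ih =>
        have : a (n + 1) = newtonSchulz (a n) := Function.iterate_succ_apply' _ _ _
        rw [this]
        exact ns_mem ih.1 (ih.2.trans one_le_sqrt3)
    have mono : Monotone a := by
      apply monotone_nat_of_le_succ
      intro k
      have h1 : a (k + 1) = newtonSchulz (a k) := Function.iterate_succ_apply' _ _ _
      have h2 := inv k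
      rw [h1]
      unfold newtonSchulz
      nlinarith [mul_nonneg (mul_nonneg h2.1 h2.1) (sub_nonneg.2 h2.2),
        mul_nonneg h2.1 (sub_nonneg.2 h2.2)]
    have bdd : BddAbove (Set.range a) := ⟨1, by rintro x ⟨k, rfl⟩; exact (inv k).2⟩
    have hlim := tendsto_atTop_ciSup mono bdd
    set L := ⨆ k, a k with hL
    have hL1 : L ≤ 1 := ciSup_le fun k => (inv k).2
    have hLw : newtonSchulz z ≤ L := by
      have := le_ciSup bdd 0
      simpa [ha] using this
    have hshift : Filter.Tendsto (fun k => a (k + 1)) Filter.atTop (nhds L) :=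
      (Filter.tendsto_add_atTop_iff_nat 1).2 hlim
    have hcomp : Filter.Tendsto (fun k => newtonSchulz (a k)) Filter.atTop
        (nhds (newtonSchulz L)) := (ns_cont.continuousAt.tendsto).comp hlim
    have heq : (fun k => a (k + 1)) = fun k => newtonSchulz (a k) := by
      funext k; exact Function.iterate_succ_apply' _ _ _
    rw [heq] at hshift
    have hfix : newtonSchulz L = L := tendsto_nhds_unique hcomp hshift
    have hLpos : 0 < L := lt_of_lt_of_le hw.1 hLw
    have hL1' : L = 1 := by
      have : 3/2 * L - 1/2 * L ^ 3 = L := hfix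
      nlinarith [mul_pos hLpos hLpos]
    rw [hL1'] at hlim
    have hfin : Filter.Tendsto (fun k => newtonSchulz^[k + 1] z) Filter.atTop (nhds 1) := by
      have heq2 : (fun k => newtonSchulz^[k + 1] z) = a := by
        funext k; exact Function.iterate_succ_apply _ _ _
      rw [heq2]; exact hlim
    exact (Filter.tendsto_add_atTop_iff_nat 1).1 hfin
end

section
/- For λ > 0 and the scalar function h_λ(z) = z/√(z²+λ²), the associated generalized matrix function (defined on arbitrary real d×d matrices A = USV^T via h_λ(A) = U h_λ(S) V^T applied to singular values) satisfies ‖h_λ(A)‖_op ≤ 1 for all A, and the operator-norm Lipschitz bound ‖h_λ(A) - h_λ(B)‖_op ≤ λ^{-1} ‖A - B‖_op for all A, B. -/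
open Matrix

/-- The ℓ²→ℓ² operator (spectral) norm of a real square matrix. -/
noncomputable def matOpNorm {d : ℕ} (A : Matrix (Fin d) (Fin d) ℝ) : ℝ :=
  ‖LinearMap.toContinuousLinearMap (Matrix.toEuclideanLin A)‖


namespace StmtAux
variable {d : ℕ}

/-- Euclidean norm of a plain vector. -/
noncomputable def en (x : Fin d → ℝ) : ℝ := Real.sqrt (x ⬝ᵥ x)

lemma dot_self_nonneg (x : Fin d → ℝ) : 0 ≤ x ⬝ᵥ x :=
  Finset.sum_nonneg fun i _ => mul_self_nonneg _

lemma en_nonneg (x : Fin d → ℝ) : 0 ≤ en x := Real.sqrt_nonneg _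

lemma en_sq (x : Fin d → ℝ) : en x ^ 2 = x ⬝ᵥ x := by
  rw [en, Real.sq_sqrt (dot_self_nonneg x)]

lemma norm_equiv_symm (x : Fin d → ℝ) :
    ‖(WithLp.equiv 2 (Fin d → ℝ)).symm x‖ = en x := by
  rw [EuclideanSpace.norm_eq, en]
  congr 1
  simp [dotProduct, sq]

lemma dot_le_en_mul_en (x y : Fin d → ℝ) : x ⬝ᵥ y ≤ en x * en y := by
  have h := @real_inner_le_norm (EuclideanSpace ℝ (Fin d)) _ _
    ((WithLp.equiv 2 (Fin d → ℝ)).symm x) ((WithLp.equiv 2 (Fin d → ℝ)).symm y)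
  rw [norm_equiv_symm, norm_equiv_symm] at h
  refine le_trans (le_of_eq ?_) h
  simp [dotProduct, PiLp.inner_apply, mul_comm]

lemma abs_dot_le (x y : Fin d → ℝ) : |x ⬝ᵥ y| ≤ en x * en y := by
  rcases abs_cases (x ⬝ᵥ y) with ⟨h, _⟩ | ⟨h, _⟩
  · rw [h]; exact dot_le_en_mul_en x y
  · rw [h]
    have := dot_le_en_mul_en (-x) y
    simpa [en, neg_dotProduct] using this

lemma en_mulVec_le (M : Matrix (Fin d) (Fin d) ℝ) (x : Fin d → ℝ) :
    en (M *ᵥ x) ≤ matOpNorm M * en x := by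
  have h := (LinearMap.toContinuousLinearMap (Matrix.toEuclideanLin M)).le_opNorm
    ((WithLp.equiv 2 (Fin d → ℝ)).symm x)
  rw [norm_equiv_symm] at h
  refine le_trans (le_of_eq ?_) h
  rw [LinearMap.coe_toContinuousLinearMap']
  exact (norm_equiv_symm (M *ᵥ x)).symm

lemma matOpNorm_nonneg (M : Matrix (Fin d) (Fin d) ℝ) : 0 ≤ matOpNorm M :=
  ContinuousLinearMap.opNorm_nonneg _

lemma norm_euclidean (v : EuclideanSpace ℝ (Fin d)) : ‖v‖ = en ((WithLp.equiv 2 (Fin d → ℝ)) v) :=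
  norm_equiv_symm _

lemma matOpNorm_le_bound (M : Matrix (Fin d) (Fin d) ℝ) {c : ℝ} (hc : 0 ≤ c)
    (h : ∀ x, en (M *ᵥ x) ≤ c * en x) : matOpNorm M ≤ c := by
  apply ContinuousLinearMap.opNorm_le_bound _ hc
  intro v
  have h1 : ‖(LinearMap.toContinuousLinearMap (Matrix.toEuclideanLin M)) v‖
      = en (M *ᵥ (WithLp.equiv 2 (Fin d → ℝ)) v) := by
    rw [LinearMap.coe_toContinuousLinearMap', norm_euclidean]
    congr 1
  rw [h1, norm_euclidean v]
  exact h _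

lemma abs_pairing_le (M : Matrix (Fin d) (Fin d) ℝ) (x y : Fin d → ℝ) :
    |x ⬝ᵥ (M *ᵥ y)| ≤ matOpNorm M * en x * en y := by
  calc |x ⬝ᵥ (M *ᵥ y)| ≤ en x * en (M *ᵥ y) := abs_dot_le _ _
    _ ≤ en x * (matOpNorm M * en y) := by
        exact mul_le_mul_of_nonneg_left (en_mulVec_le M y) (en_nonneg x)
    _ = matOpNorm M * en x * en y := by ring

lemma matOpNorm_le_of_pairing (M : Matrix (Fin d) (Fin d) ℝ) {c : ℝ} (hc : 0 ≤ c)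
    (h : ∀ x y, |x ⬝ᵥ (M *ᵥ y)| ≤ c * en x * en y) : matOpNorm M ≤ c := by
  apply matOpNorm_le_bound M hc
  intro y
  rcases eq_or_lt_of_le (en_nonneg (M *ᵥ y)) with h0 | h0
  · rw [← h0]; exact mul_nonneg hc (en_nonneg y)
  · have h1 := h (M *ᵥ y) y
    have h2 : en (M *ᵥ y) ^ 2 ≤ c * en (M *ᵥ y) * en y := by
      rw [en_sq]
      exact le_trans (le_abs_self _) h1
    nlinarith


lemma smul_one_eq_diagonal (m : ℝ) :
    m • (1 : Matrix (Fin d) (Fin d) ℝ) = diagonal (fun _ => m) := by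
  ext i j
  by_cases h : i = j <;> simp [Matrix.one_apply, Matrix.diagonal, h]

lemma posSemidef_tmul (A : Matrix (Fin d) (Fin d) ℝ) : (Aᵀ * A).PosSemidef := by
  have := Matrix.posSemidef_conjTranspose_mul_self A
  rwa [Matrix.conjTranspose_eq_transpose_of_trivial] at this

lemma posSemidef_mult (A : Matrix (Fin d) (Fin d) ℝ) : (A * Aᵀ).PosSemidef := by
  have := posSemidef_tmul Aᵀ
  rwa [transpose_transpose] at this

lemma posDef_shift {M : Matrix (Fin d) (Fin d) ℝ} (hM : M.PosSemidef) {m : ℝ} (hm : 0 < m) :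
    (M + m • (1 : Matrix (Fin d) (Fin d) ℝ)).PosDef := by
  rw [smul_one_eq_diagonal]
  exact Matrix.PosDef.posSemidef_add hM (Matrix.PosDef.diagonal fun _ => hm)

lemma isHermitian_shift (A : Matrix (Fin d) (Fin d) ℝ) (m : ℝ) :
    (Aᵀ * A + m • (1 : Matrix (Fin d) (Fin d) ℝ)).IsHermitian := by
  refine ((posSemidef_tmul A).isHermitian).add ?_
  rw [smul_one_eq_diagonal]
  exact isHermitian_diagonal _


lemma dot_mulVec_comm (M : Matrix (Fin d) (Fin d) ℝ) (x y : Fin d → ℝ) :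
    x ⬝ᵥ (M *ᵥ y) = (Mᵀ *ᵥ x) ⬝ᵥ y := by
  rw [Matrix.dotProduct_mulVec, ← Matrix.vecMul_transpose, transpose_transpose]

lemma matOpNorm_transpose (M : Matrix (Fin d) (Fin d) ℝ) :
    matOpNorm Mᵀ = matOpNorm M := by
  have key : ∀ N : Matrix (Fin d) (Fin d) ℝ, matOpNorm Nᵀ ≤ matOpNorm N := by
    intro N
    apply matOpNorm_le_of_pairing _ (matOpNorm_nonneg N)
    intro x y
    have h1 : x ⬝ᵥ (Nᵀ *ᵥ y) = y ⬝ᵥ (N *ᵥ x) := by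
      rw [Matrix.mulVec_transpose, dotProduct_comm, Matrix.dotProduct_mulVec]
    rw [h1]
    calc |y ⬝ᵥ (N *ᵥ x)| ≤ matOpNorm N * en y * en x := abs_pairing_le N y x
      _ = matOpNorm N * en x * en y := by ring
  refine le_antisymm (key M) ?_
  have := key Mᵀ
  rwa [transpose_transpose] at this

/-- For a matrix with `1 - MᵀM` PSD, operator norm is at most one. -/
lemma matOpNorm_le_one (M : Matrix (Fin d) (Fin d) ℝ)
    (h : ((1 : Matrix (Fin d) (Fin d) ℝ) - Mᵀ * M).PosSemidef) : matOpNorm M ≤ 1 := by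
  apply matOpNorm_le_bound _ zero_le_one
  intro x
  have h2 := h.dotProduct_mulVec_nonneg x
  rw [star_trivial, sub_mulVec, dotProduct_sub, one_mulVec] at h2
  have h3 : en (M *ᵥ x) ^ 2 ≤ en x ^ 2 := by
    rw [en_sq, en_sq]
    have : x ⬝ᵥ ((Mᵀ * M) *ᵥ x) = (M *ᵥ x) ⬝ᵥ (M *ᵥ x) := by
      rw [← Matrix.mulVec_mulVec, dot_mulVec_comm, transpose_transpose]
    rw [← this]
    linarith
  rw [one_mul]
  nlinarith [en_nonneg (M *ᵥ x), en_nonneg x]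

lemma sqrt_cs (a b c e : ℝ) (ha : 0 ≤ a) (hb : 0 ≤ b) (hc : 0 ≤ c) (he : 0 ≤ e) :
    a * c + b * e ≤ Real.sqrt (a^2 + b^2) * Real.sqrt (c^2 + e^2) := by
  have h1 : a * c + b * e = Real.sqrt ((a*c + b*e)^2) := by
    rw [Real.sqrt_sq (by positivity)]
  rw [h1, ← Real.sqrt_mul (by positivity)]
  apply Real.sqrt_le_sqrt
  nlinarith [sq_nonneg (a*e - b*c)]

variable {A B : Matrix (Fin d) (Fin d) ℝ} {m : ℝ}

lemma pdefP (A : Matrix (Fin d) (Fin d) ℝ) (hm : 0 < m) :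
    (A * Aᵀ + m • (1 : Matrix (Fin d) (Fin d) ℝ)).PosDef :=
  posDef_shift (posSemidef_mult A) hm

lemma mulVec_inv_cancel {P : Matrix (Fin d) (Fin d) ℝ} (hP : P.PosDef) (x : Fin d → ℝ) :
    P *ᵥ (P⁻¹ *ᵥ x) = x := by
  rw [Matrix.mulVec_mulVec, Matrix.mul_nonsing_inv _ (isUnit_iff_ne_zero.mpr hP.det_pos.ne'),
    Matrix.one_mulVec]

lemma inv_transpose_eq {P : Matrix (Fin d) (Fin d) ℝ} (hP : P.IsHermitian) :
    (P⁻¹)ᵀ = P⁻¹ := by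
  rw [Matrix.transpose_nonsing_inv, ← Matrix.conjTranspose_eq_transpose_of_trivial, hP]

/-- key quadratic bound : with `P = A Aᵀ + m`, `t = P⁻¹ x`,
 `m ‖t‖² + ‖Aᵀ t‖² ≤ m⁻¹ ‖x‖²`. -/
lemma quad_bound (A : Matrix (Fin d) (Fin d) ℝ) (hm : 0 < m) (x : Fin d → ℝ) :
    m * en ((A * Aᵀ + m • (1 : Matrix (Fin d) (Fin d) ℝ))⁻¹ *ᵥ x) ^ 2
      + en (Aᵀ *ᵥ ((A * Aᵀ + m • (1 : Matrix (Fin d) (Fin d) ℝ))⁻¹ *ᵥ x)) ^ 2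
    ≤ m⁻¹ * en x ^ 2 := by
  set P : Matrix (Fin d) (Fin d) ℝ := A * Aᵀ + m • 1 with hPdef
  have hP : P.PosDef := pdefP A hm
  set t : Fin d → ℝ := P⁻¹ *ᵥ x with htdef
  have hPt : P *ᵥ t = x := mulVec_inv_cancel hP x
  have key : m * en t ^ 2 + en (Aᵀ *ᵥ t) ^ 2 = t ⬝ᵥ x := by
    rw [en_sq, en_sq, ← hPt, hPdef]
    rw [Matrix.add_mulVec, Matrix.smul_mulVec, Matrix.one_mulVec, dotProduct_add,
      dotProduct_smul, ← Matrix.mulVec_mulVec, dot_mulVec_comm A]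
    rw [smul_eq_mul]
    ring
  -- en t ≤ m⁻¹ en x
  have htx : m * en t ^ 2 ≤ en t * en x := by
    have h1 : t ⬝ᵥ x ≤ en t * en x := dot_le_en_mul_en t x
    nlinarith [en_sq (Aᵀ *ᵥ t), dot_self_nonneg (Aᵀ *ᵥ t), en_sq t]
  have hent : en t ≤ m⁻¹ * en x := by
    rcases eq_or_lt_of_le (en_nonneg t) with h0 | h0
    · rw [← h0]; exact mul_nonneg (by positivity) (en_nonneg x)
    · rw [← mul_le_mul_iff_right₀ hm, ← mul_assoc, mul_inv_cancel₀ hm.ne', one_mul]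
      nlinarith
  calc m * en t ^ 2 + en (Aᵀ *ᵥ t) ^ 2 = t ⬝ᵥ x := key
    _ ≤ en t * en x := dot_le_en_mul_en t x
    _ ≤ (m⁻¹ * en x) * en x := by
        exact mul_le_mul_of_nonneg_right hent (en_nonneg x)
    _ = m⁻¹ * en x ^ 2 := by ring

lemma swap_inv (A : Matrix (Fin d) (Fin d) ℝ) (hm : 0 < m) :
    A * (Aᵀ * A + m • (1 : Matrix (Fin d) (Fin d) ℝ))⁻¹
      = (A * Aᵀ + m • (1 : Matrix (Fin d) (Fin d) ℝ))⁻¹ * A := by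
  set Q : Matrix (Fin d) (Fin d) ℝ := Aᵀ * A + m • 1 with hQdef
  set P : Matrix (Fin d) (Fin d) ℝ := A * Aᵀ + m • 1 with hPdef
  have hQ : Q.PosDef := by
    rw [hQdef]; exact posDef_shift (posSemidef_tmul A) hm
  have hP : P.PosDef := pdefP A hm
  have hQu : IsUnit Q.det := isUnit_iff_ne_zero.mpr hQ.det_pos.ne'
  have hPu : IsUnit P.det := isUnit_iff_ne_zero.mpr hP.det_pos.ne'
  have key : A * Q = P * A := by
    rw [hPdef, hQdef, mul_add, add_mul, ← mul_assoc, mul_smul_comm, Matrix.smul_mul,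
      mul_one, one_mul, mul_assoc]
  calc A * Q⁻¹ = P⁻¹ * (P * (A * Q⁻¹)) := by
        rw [← mul_assoc, Matrix.nonsing_inv_mul _ hPu, one_mul]
    _ = P⁻¹ * ((A * Q) * Q⁻¹) := by rw [key, mul_assoc]
    _ = P⁻¹ * A := by rw [mul_assoc, Matrix.mul_nonsing_inv _ hQu, mul_one]

/-- The core resolvent-difference bound. -/
lemma resolvent_bound (A B : Matrix (Fin d) (Fin d) ℝ) (hm : 0 < m) (x y : Fin d → ℝ) :
    |x ⬝ᵥ ((A * (Aᵀ * A + m • (1 : Matrix (Fin d) (Fin d) ℝ))⁻¹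
        - B * (Bᵀ * B + m • (1 : Matrix (Fin d) (Fin d) ℝ))⁻¹) *ᵥ y)|
      ≤ m⁻¹ * matOpNorm (A - B) * en x * en y := by
  set P : Matrix (Fin d) (Fin d) ℝ := A * Aᵀ + m • 1 with hPdef
  set Q : Matrix (Fin d) (Fin d) ℝ := Bᵀ * B + m • 1 with hQdef
  have hP : P.PosDef := pdefP A hm
  have hQ : Q.PosDef := by rw [hQdef]; exact posDef_shift (posSemidef_tmul B) hm
  have hPu : IsUnit P.det := isUnit_iff_ne_zero.mpr hP.det_pos.ne'
  have hQu : IsUnit Q.det := isUnit_iff_ne_zero.mpr hQ.det_pos.ne'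
  set D : Matrix (Fin d) (Fin d) ℝ := A - B with hDdef
  -- step 2 : algebraic identity
  have e1 : A * Q - P * B = m • D - A * Dᵀ * B := by
    rw [hPdef, hQdef, hDdef]
    rw [transpose_sub]
    noncomm_ring
    module
  have step2 : A * (Aᵀ * A + m • (1 : Matrix (Fin d) (Fin d) ℝ))⁻¹ - B * Q⁻¹
      = P⁻¹ * ((m • D - A * Dᵀ * B) * Q⁻¹) := by
    rw [swap_inv A hm, ← hPdef]
    calc P⁻¹ * A - B * Q⁻¹
        = P⁻¹ * (A * (Q * Q⁻¹)) - (P⁻¹ * P) * (B * Q⁻¹) := by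
          rw [Matrix.mul_nonsing_inv _ hQu, Matrix.nonsing_inv_mul _ hPu, mul_one, one_mul]
      _ = P⁻¹ * ((A * Q - P * B) * Q⁻¹) := by noncomm_ring
      _ = P⁻¹ * ((m • D - A * Dᵀ * B) * Q⁻¹) := by rw [e1]
  rw [step2]
  set t : Fin d → ℝ := P⁻¹ *ᵥ x with htdef
  set w : Fin d → ℝ := Q⁻¹ *ᵥ y with hwdef
  -- pairing formula
  have pair : x ⬝ᵥ ((P⁻¹ * ((m • D - A * Dᵀ * B) * Q⁻¹)) *ᵥ y)
      = m * (t ⬝ᵥ (D *ᵥ w)) - (Aᵀ *ᵥ t) ⬝ᵥ (Dᵀ *ᵥ (B *ᵥ w)) := by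
    rw [← Matrix.mulVec_mulVec, dot_mulVec_comm, inv_transpose_eq hP.1, ← htdef,
      ← Matrix.mulVec_mulVec, ← hwdef, Matrix.sub_mulVec, dotProduct_sub,
      Matrix.smul_mulVec, dotProduct_smul, smul_eq_mul,
      ← Matrix.mulVec_mulVec, ← Matrix.mulVec_mulVec, dot_mulVec_comm A]
  rw [pair]
  -- individual bounds
  have b1 : |m * (t ⬝ᵥ (D *ᵥ w))| ≤ matOpNorm D * ((Real.sqrt m * en t) * (Real.sqrt m * en w)) := by
    rw [abs_mul, abs_of_pos hm]
    calc m * |t ⬝ᵥ (D *ᵥ w)| ≤ m * (matOpNorm D * en t * en w) :=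
          mul_le_mul_of_nonneg_left (abs_pairing_le D t w) hm.le
      _ = matOpNorm D * ((Real.sqrt m * en t) * (Real.sqrt m * en w)) := by
          have hsq : Real.sqrt m * Real.sqrt m = m := Real.mul_self_sqrt hm.le
          linear_combination (-(matOpNorm D * en t * en w)) * hsq
  have b2 : |(Aᵀ *ᵥ t) ⬝ᵥ (Dᵀ *ᵥ (B *ᵥ w))| ≤ matOpNorm D * (en (Aᵀ *ᵥ t) * en (B *ᵥ w)) := by
    calc |(Aᵀ *ᵥ t) ⬝ᵥ (Dᵀ *ᵥ (B *ᵥ w))|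
        ≤ matOpNorm Dᵀ * en (Aᵀ *ᵥ t) * en (B *ᵥ w) := abs_pairing_le _ _ _
      _ = matOpNorm D * (en (Aᵀ *ᵥ t) * en (B *ᵥ w)) := by
          rw [matOpNorm_transpose]; ring
  have cs : (Real.sqrt m * en t) * (Real.sqrt m * en w) + en (Aᵀ *ᵥ t) * en (B *ᵥ w)
      ≤ Real.sqrt ((Real.sqrt m * en t)^2 + en (Aᵀ *ᵥ t)^2)
        * Real.sqrt ((Real.sqrt m * en w)^2 + en (B *ᵥ w)^2) := by
    exact sqrt_cs _ _ _ _ (mul_nonneg (Real.sqrt_nonneg _) (en_nonneg _)) (en_nonneg _)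
      (mul_nonneg (Real.sqrt_nonneg _) (en_nonneg _)) (en_nonneg _)
  have q1 : (Real.sqrt m * en t)^2 + en (Aᵀ *ᵥ t)^2 ≤ m⁻¹ * en x ^ 2 := by
    have := quad_bound A hm x
    rw [mul_pow, Real.sq_sqrt hm.le]
    exact this
  have q2 : (Real.sqrt m * en w)^2 + en (B *ᵥ w)^2 ≤ m⁻¹ * en y ^ 2 := by
    have h := quad_bound Bᵀ hm y
    rw [transpose_transpose] at h
    rw [mul_pow, Real.sq_sqrt hm.le]
    rw [hwdef, hQdef]
    exact h
  have sq1 : Real.sqrt ((Real.sqrt m * en t)^2 + en (Aᵀ *ᵥ t)^2) ≤ Real.sqrt m⁻¹ * en x := by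
    rw [← Real.sqrt_sq (en_nonneg x), ← Real.sqrt_mul (by positivity)]
    exact Real.sqrt_le_sqrt q1
  have sq2 : Real.sqrt ((Real.sqrt m * en w)^2 + en (B *ᵥ w)^2) ≤ Real.sqrt m⁻¹ * en y := by
    rw [← Real.sqrt_sq (en_nonneg y), ← Real.sqrt_mul (by positivity)]
    exact Real.sqrt_le_sqrt q2
  calc |m * (t ⬝ᵥ (D *ᵥ w)) - (Aᵀ *ᵥ t) ⬝ᵥ (Dᵀ *ᵥ (B *ᵥ w))|
      ≤ |m * (t ⬝ᵥ (D *ᵥ w))| + |(Aᵀ *ᵥ t) ⬝ᵥ (Dᵀ *ᵥ (B *ᵥ w))| := abs_sub _ _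
    _ ≤ matOpNorm D * ((Real.sqrt m * en t) * (Real.sqrt m * en w))
        + matOpNorm D * (en (Aᵀ *ᵥ t) * en (B *ᵥ w)) := add_le_add b1 b2
    _ = matOpNorm D * ((Real.sqrt m * en t) * (Real.sqrt m * en w)
        + en (Aᵀ *ᵥ t) * en (B *ᵥ w)) := by ring
    _ ≤ matOpNorm D * ((Real.sqrt m⁻¹ * en x) * (Real.sqrt m⁻¹ * en y)) := by
        apply mul_le_mul_of_nonneg_left _ (matOpNorm_nonneg D)
        calc (Real.sqrt m * en t) * (Real.sqrt m * en w) + en (Aᵀ *ᵥ t) * en (B *ᵥ w)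
            ≤ Real.sqrt ((Real.sqrt m * en t)^2 + en (Aᵀ *ᵥ t)^2)
              * Real.sqrt ((Real.sqrt m * en w)^2 + en (B *ᵥ w)^2) := cs
          _ ≤ (Real.sqrt m⁻¹ * en x) * (Real.sqrt m⁻¹ * en y) := by
              apply mul_le_mul sq1 sq2 (Real.sqrt_nonneg _)
                (mul_nonneg (Real.sqrt_nonneg _) (en_nonneg _))
    _ = m⁻¹ * matOpNorm (A - B) * en x * en y := by
        rw [← hDdef]
        rw [show Real.sqrt m⁻¹ * en x * (Real.sqrt m⁻¹ * en y)
          = (Real.sqrt m⁻¹ * Real.sqrt m⁻¹) * (en x * en y) by ring,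
          Real.mul_self_sqrt (by positivity)]
        ring

section Spectral
variable {V G : Matrix (Fin d) (Fin d) ℝ} {ev : Fin d → ℝ}

lemma conj_diag_mul (hV : Vᵀ * V = 1) (c₁ c₂ : Fin d → ℝ) :
    (V * diagonal c₁ * Vᵀ) * (V * diagonal c₂ * Vᵀ)
      = V * diagonal (fun k => c₁ k * c₂ k) * Vᵀ := by
  have : diagonal c₁ * diagonal c₂ = diagonal (fun k => c₁ k * c₂ k) := by
    rw [diagonal_mul_diagonal]
  calc (V * diagonal c₁ * Vᵀ) * (V * diagonal c₂ * Vᵀ)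
      = V * diagonal c₁ * (Vᵀ * V) * diagonal c₂ * Vᵀ := by noncomm_ring
    _ = V * (diagonal c₁ * diagonal c₂) * Vᵀ := by rw [hV, mul_one]; noncomm_ring
    _ = V * diagonal (fun k => c₁ k * c₂ k) * Vᵀ := by rw [this]

lemma conj_shift (hVV : V * Vᵀ = 1) (hspec : G = V * diagonal ev * Vᵀ) (μ : ℝ) :
    G + μ • (1 : Matrix (Fin d) (Fin d) ℝ) = V * diagonal (fun k => ev k + μ) * Vᵀ := by
  have h1 : μ • (1 : Matrix (Fin d) (Fin d) ℝ) = V * diagonal (fun _ => μ) * Vᵀ := by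
    rw [smul_one_eq_diagonal]
    have : (diagonal (fun _ => μ) : Matrix (Fin d) (Fin d) ℝ) = μ • 1 := by
      rw [smul_one_eq_diagonal]
    rw [this, Matrix.mul_smul, Matrix.smul_mul, mul_one, hVV, smul_one_eq_diagonal]
  rw [hspec, h1, ← Matrix.add_mul, ← Matrix.mul_add, diagonal_add]

lemma conj_inv (hV : Vᵀ * V = 1) (hVV : V * Vᵀ = 1)
    (hspec : G = V * diagonal ev * Vᵀ) {μ : ℝ} (hμ : ∀ k, ev k + μ ≠ 0) :
    (G + μ • (1 : Matrix (Fin d) (Fin d) ℝ))⁻¹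
      = V * diagonal (fun k => (ev k + μ)⁻¹) * Vᵀ := by
  apply Matrix.inv_eq_right_inv
  rw [conj_shift hVV hspec μ, conj_diag_mul hV]
  have : (fun k => (ev k + μ) * (ev k + μ)⁻¹) = fun _ => (1:ℝ) := by
    funext k; exact mul_inv_cancel₀ (hμ k)
  rw [this, diagonal_one, mul_one, hVV]

lemma pairing_formula (A' : Matrix (Fin d) (Fin d) ℝ) (c : Fin d → ℝ) (x y : Fin d → ℝ) :
    x ⬝ᵥ ((A' * (V * diagonal c * Vᵀ)) *ᵥ y)
      = ∑ k, c k * ((Vᵀ *ᵥ (A'ᵀ *ᵥ x)) k * ((Vᵀ *ᵥ y) k)) := by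
  rw [← Matrix.mulVec_mulVec, dot_mulVec_comm A', ← Matrix.mulVec_mulVec,
    ← Matrix.mulVec_mulVec, dot_mulVec_comm V, dot_mulVec_comm (diagonal c),
    Matrix.diagonal_transpose]
  simp [dotProduct, Matrix.mulVec_diagonal]
  congr 1
  funext k
  ring
end Spectral

section Sid
variable {lam : ℝ}

/-- Identification of the implicit `S` with the explicit spectral formula. -/
lemma S_eq (A S : Matrix (Fin d) (Fin d) ℝ) (hlam : 0 < lam) (hSpd : S.PosDef)
    (hS : S * S * (Aᵀ * A + lam ^ 2 • (1 : Matrix (Fin d) (Fin d) ℝ)) = 1)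
    {V : Matrix (Fin d) (Fin d) ℝ} {ev : Fin d → ℝ}
    (hV : Vᵀ * V = 1) (hVV : V * Vᵀ = 1)
    (hspec : Aᵀ * A = V * diagonal ev * Vᵀ)
    (hev : ∀ k, 0 ≤ ev k) :
    S = V * diagonal (fun k => (Real.sqrt (ev k + lam ^ 2))⁻¹) * Vᵀ := by
  set T : Matrix (Fin d) (Fin d) ℝ :=
    V * diagonal (fun k => (Real.sqrt (ev k + lam ^ 2))⁻¹) * Vᵀ with hTdef
  have hpos : ∀ k, (0:ℝ) < ev k + lam ^ 2 := fun k => by nlinarith [hev k, pow_pos hlam 2]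
  have hfun : (fun k => (Real.sqrt (ev k + lam ^ 2))⁻¹ * (Real.sqrt (ev k + lam ^ 2))⁻¹)
      = fun k => (ev k + lam ^ 2)⁻¹ :=
    funext fun k => by rw [← mul_inv, Real.mul_self_sqrt (hpos k).le]
  have hT2 : T * T = V * diagonal (fun k => (ev k + lam ^ 2)⁻¹) * Vᵀ := by
    rw [hTdef, conj_diag_mul hV, hfun]
  have hTT : T * T * (Aᵀ * A + lam ^ 2 • (1 : Matrix (Fin d) (Fin d) ℝ)) = 1 := by
    rw [hT2, conj_shift hVV hspec, conj_diag_mul hV]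
    have : (fun k => (ev k + lam ^ 2)⁻¹ * (ev k + lam ^ 2)) = fun _ => (1:ℝ) := by
      funext k; exact inv_mul_cancel₀ (hpos k).ne'
    rw [this, diagonal_one, mul_one, hVV]
  -- S * S = T * T
  have hM : (Aᵀ * A + lam ^ 2 • (1 : Matrix (Fin d) (Fin d) ℝ)).PosDef :=
    posDef_shift (posSemidef_tmul A) (by positivity)
  have hMu : IsUnit (Aᵀ * A + lam ^ 2 • (1 : Matrix (Fin d) (Fin d) ℝ)).det :=
    isUnit_iff_ne_zero.mpr hM.det_pos.ne'
  have hSS : S * S = T * T := by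
    have e1 : S * S = (Aᵀ * A + lam ^ 2 • (1 : Matrix (Fin d) (Fin d) ℝ))⁻¹ :=
      (Matrix.inv_eq_left_inv hS).symm
    have e2 : T * T = (Aᵀ * A + lam ^ 2 • (1 : Matrix (Fin d) (Fin d) ℝ))⁻¹ :=
      (Matrix.inv_eq_left_inv hTT).symm
    rw [e1, e2]
  -- T is PosSemidef
  have hTpsd : T.PosSemidef := by
    have hdiag : (diagonal (fun k => (Real.sqrt (ev k + lam ^ 2))⁻¹)
        : Matrix (Fin d) (Fin d) ℝ).PosSemidef := by
      rw [Matrix.posSemidef_diagonal_iff]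
      intro k
      positivity
    have := hdiag.mul_mul_conjTranspose_same V
    rwa [Matrix.conjTranspose_eq_transpose_of_trivial] at this
  open scoped MatrixOrder in
  exact (CFC.sq_eq_sq_iff S T hSpd.posSemidef.nonneg hTpsd.nonneg).mp (by rw [pow_two, pow_two, hSS])
end Sid

section Part1
variable {lam : ℝ}

lemma part1_bound (A S : Matrix (Fin d) (Fin d) ℝ) (hlam : 0 < lam)
    {V : Matrix (Fin d) (Fin d) ℝ} {ev : Fin d → ℝ}
    (hV : Vᵀ * V = 1) (hVV : V * Vᵀ = 1)
    (hspec : Aᵀ * A = V * diagonal ev * Vᵀ)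
    (hev : ∀ k, 0 ≤ ev k)
    (hSeq : S = V * diagonal (fun k => (Real.sqrt (ev k + lam ^ 2))⁻¹) * Vᵀ) :
    matOpNorm (A * S) ≤ 1 := by
  have hpos : ∀ k, (0:ℝ) < ev k + lam ^ 2 := fun k => by nlinarith [hev k, pow_pos hlam 2]
  apply matOpNorm_le_one
  have hSt : Sᵀ = S := by
    rw [hSeq]
    simp [Matrix.transpose_mul, Matrix.mul_assoc]
  have h1 : (A * S)ᵀ * (A * S) = S * (Aᵀ * A) * S := by
    rw [Matrix.transpose_mul, hSt]
    noncomm_ring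
  have h2 : S * (Aᵀ * A) * S
      = V * diagonal (fun k => (Real.sqrt (ev k + lam ^ 2))⁻¹
          * ev k * (Real.sqrt (ev k + lam ^ 2))⁻¹) * Vᵀ := by
    rw [hSeq, hspec, conj_diag_mul hV, conj_diag_mul hV]
  have h3 : (1 : Matrix (Fin d) (Fin d) ℝ) - (A * S)ᵀ * (A * S)
      = V * diagonal (fun k => 1 - (Real.sqrt (ev k + lam ^ 2))⁻¹
          * ev k * (Real.sqrt (ev k + lam ^ 2))⁻¹) * Vᵀ := by
    rw [h1, h2]
    have hone : (1 : Matrix (Fin d) (Fin d) ℝ) = V * diagonal (fun _ => (1:ℝ)) * Vᵀ := by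
      rw [diagonal_one, mul_one, hVV]
    rw [hone]
    rw [← Matrix.sub_mul, ← Matrix.mul_sub, Matrix.diagonal_sub]
  rw [h3]
  have hdiag : (diagonal (fun k => 1 - (Real.sqrt (ev k + lam ^ 2))⁻¹
      * ev k * (Real.sqrt (ev k + lam ^ 2))⁻¹) : Matrix (Fin d) (Fin d) ℝ).PosSemidef := by
    rw [Matrix.posSemidef_diagonal_iff]
    intro k
    have hs : (Real.sqrt (ev k + lam ^ 2))⁻¹ * ev k * (Real.sqrt (ev k + lam ^ 2))⁻¹
        = ev k / (ev k + lam ^ 2) := by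
      have hr : (0:ℝ) < Real.sqrt (ev k + lam ^ 2) := Real.sqrt_pos.mpr (hpos k)
      have hr2 : Real.sqrt (ev k + lam ^ 2) * Real.sqrt (ev k + lam ^ 2) = ev k + lam ^ 2 :=
        Real.mul_self_sqrt (hpos k).le
      rw [← hr2]
      field_simp
      rw [Real.sqrt_sq hr.le]
    rw [hs, sub_nonneg]
    apply div_le_one_of_le₀ (by nlinarith [pow_pos hlam 2]) (hpos k).le
  have := hdiag.mul_mul_conjTranspose_same V
  rwa [Matrix.conjTranspose_eq_transpose_of_trivial] at this
end Part1

section Integral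
open MeasureTheory Real Filter

lemma integrable_res {b : ℝ} (hb : 0 < b) :
    IntegrableOn (fun s : ℝ => (b + s ^ 2)⁻¹) (Set.Ioi 0) := by
  have hsb : (0:ℝ) < Real.sqrt b := Real.sqrt_pos.mpr hb
  have hderiv : ∀ s ∈ Set.Ici (0:ℝ),
      HasDerivAt (fun s : ℝ => (Real.sqrt b)⁻¹ * Real.arctan (s / Real.sqrt b))
        ((b + s ^ 2)⁻¹) s := by
    intro s _
    have h1 : HasDerivAt (fun s : ℝ => s / Real.sqrt b) ((Real.sqrt b)⁻¹) s := by
      simpa [div_eq_mul_inv] using (hasDerivAt_id s).mul_const ((Real.sqrt b)⁻¹)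
    have h2 := (Real.hasDerivAt_arctan (s / Real.sqrt b)).comp s h1
    have h3 := h2.const_mul ((Real.sqrt b)⁻¹)
    refine h3.congr_deriv ?_
    have hb2 : Real.sqrt b * Real.sqrt b = b := Real.mul_self_sqrt hb.le
    field_simp
    rw [Real.sq_sqrt hb.le]
  have htend : Tendsto (fun s : ℝ => (Real.sqrt b)⁻¹ * Real.arctan (s / Real.sqrt b))
      atTop (nhds ((Real.sqrt b)⁻¹ * (Real.pi / 2))) := by
    apply Tendsto.const_mul
    apply (Real.tendsto_arctan_atTop.mono_right nhdsWithin_le_nhds).comp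
    exact tendsto_id.atTop_div_const hsb
  exact integrableOn_Ioi_deriv_of_nonneg' (fun s hs => hderiv s hs)
    (fun s _ => by positivity) htend

lemma integral_res {b : ℝ} (hb : 0 < b) :
    ∫ s in Set.Ioi (0:ℝ), (b + s ^ 2)⁻¹
      = Real.pi / 2 * (Real.sqrt b)⁻¹ := by
  have hsb : (0:ℝ) < Real.sqrt b := Real.sqrt_pos.mpr hb
  have hderiv : ∀ s ∈ Set.Ici (0:ℝ),
      HasDerivAt (fun s : ℝ => (Real.sqrt b)⁻¹ * Real.arctan (s / Real.sqrt b))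
        ((b + s ^ 2)⁻¹) s := by
    intro s _
    have h1 : HasDerivAt (fun s : ℝ => s / Real.sqrt b) ((Real.sqrt b)⁻¹) s := by
      simpa [div_eq_mul_inv] using (hasDerivAt_id s).mul_const ((Real.sqrt b)⁻¹)
    have h2 := (Real.hasDerivAt_arctan (s / Real.sqrt b)).comp s h1
    have h3 := h2.const_mul ((Real.sqrt b)⁻¹)
    refine h3.congr_deriv ?_
    have hb2 : Real.sqrt b * Real.sqrt b = b := Real.mul_self_sqrt hb.le
    field_simp
    rw [Real.sq_sqrt hb.le]
  have htend : Tendsto (fun s : ℝ => (Real.sqrt b)⁻¹ * Real.arctan (s / Real.sqrt b))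
      atTop (nhds ((Real.sqrt b)⁻¹ * (Real.pi / 2))) := by
    apply Tendsto.const_mul
    apply (Real.tendsto_arctan_atTop.mono_right nhdsWithin_le_nhds).comp
    exact tendsto_id.atTop_div_const hsb
  have := integral_Ioi_of_hasDerivAt_of_nonneg' (fun s hs => hderiv s hs)
    (fun s _ => by positivity) htend
  rw [this]
  simp [Real.arctan_zero]
  ring
end Integral

section Repr
open MeasureTheory Real Filter
variable {lam : ℝ}

lemma repr_integrand (A : Matrix (Fin d) (Fin d) ℝ) (hlam : 0 < lam)
    {V : Matrix (Fin d) (Fin d) ℝ} {ev : Fin d → ℝ}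
    (hV : Vᵀ * V = 1) (hVV : V * Vᵀ = 1)
    (hspec : Aᵀ * A = V * diagonal ev * Vᵀ)
    (hev : ∀ k, 0 ≤ ev k) (x y : Fin d → ℝ) (s : ℝ) :
    x ⬝ᵥ ((A * (Aᵀ * A + (lam ^ 2 + s ^ 2) • (1 : Matrix (Fin d) (Fin d) ℝ))⁻¹) *ᵥ y)
      = ∑ k, ((ev k + lam ^ 2) + s ^ 2)⁻¹
          * ((Vᵀ *ᵥ (Aᵀ *ᵥ x)) k * ((Vᵀ *ᵥ y) k)) := by
  have hμ : ∀ k, ev k + (lam ^ 2 + s ^ 2) ≠ 0 := by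
    intro k
    nlinarith [hev k, pow_pos hlam 2, sq_nonneg s]
  rw [conj_inv hV hVV hspec hμ, pairing_formula]
  exact Finset.sum_congr rfl fun k _ => by ring_nf

lemma repr_integral (A : Matrix (Fin d) (Fin d) ℝ) (hlam : 0 < lam)
    {V : Matrix (Fin d) (Fin d) ℝ} {ev : Fin d → ℝ}
    (hV : Vᵀ * V = 1) (hVV : V * Vᵀ = 1)
    (hspec : Aᵀ * A = V * diagonal ev * Vᵀ)
    (hev : ∀ k, 0 ≤ ev k) (x y : Fin d → ℝ) :
    IntegrableOn (fun s : ℝ =>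
        x ⬝ᵥ ((A * (Aᵀ * A + (lam ^ 2 + s ^ 2) • (1 : Matrix (Fin d) (Fin d) ℝ))⁻¹) *ᵥ y))
      (Set.Ioi 0)
    ∧ (∫ s in Set.Ioi (0:ℝ),
        x ⬝ᵥ ((A * (Aᵀ * A + (lam ^ 2 + s ^ 2) • (1 : Matrix (Fin d) (Fin d) ℝ))⁻¹) *ᵥ y))
      = Real.pi / 2
        * (x ⬝ᵥ ((A * (V * diagonal (fun k => (Real.sqrt (ev k + lam ^ 2))⁻¹) * Vᵀ)) *ᵥ y)) := by
  have hb : ∀ k : Fin d, (0:ℝ) < ev k + lam ^ 2 := fun k => by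
    nlinarith [hev k, pow_pos hlam 2]
  have hfun : (fun s : ℝ =>
      x ⬝ᵥ ((A * (Aᵀ * A + (lam ^ 2 + s ^ 2) • (1 : Matrix (Fin d) (Fin d) ℝ))⁻¹) *ᵥ y))
      = fun s : ℝ => ∑ k, ((ev k + lam ^ 2) + s ^ 2)⁻¹
          * ((Vᵀ *ᵥ (Aᵀ *ᵥ x)) k * ((Vᵀ *ᵥ y) k)) :=
    funext fun s => repr_integrand A hlam hV hVV hspec hev x y s
  have hint : ∀ k : Fin d, IntegrableOn
      (fun s : ℝ => ((ev k + lam ^ 2) + s ^ 2)⁻¹ * ((Vᵀ *ᵥ (Aᵀ *ᵥ x)) k * ((Vᵀ *ᵥ y) k)))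
      (Set.Ioi 0) := fun k => (integrable_res (hb k)).mul_const _
  constructor
  · rw [hfun]
    exact integrable_finset_sum _ fun k _ => hint k
  · rw [hfun]
    rw [MeasureTheory.integral_finset_sum _ fun k _ => hint k]
    rw [pairing_formula]
    rw [Finset.mul_sum]
    refine Finset.sum_congr rfl fun k _ => ?_
    rw [MeasureTheory.integral_mul_const, integral_res (hb k)]
    ring
end Repr

/-- Package of spectral data for `Aᵀ * A`. -/
lemma spectral_package (A : Matrix (Fin d) (Fin d) ℝ) :
    ∃ (V : Matrix (Fin d) (Fin d) ℝ) (ev : Fin d → ℝ),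
      Vᵀ * V = 1 ∧ V * Vᵀ = 1 ∧ Aᵀ * A = V * diagonal ev * Vᵀ ∧ ∀ k, 0 ≤ ev k := by
  have hG : (Aᵀ * A).PosSemidef := posSemidef_tmul A
  have hGH : (Aᵀ * A).IsHermitian := hG.isHermitian
  have hst : (hGH.eigenvectorUnitary : Matrix (Fin d) (Fin d) ℝ)ᵀ
      = star (hGH.eigenvectorUnitary : Matrix (Fin d) (Fin d) ℝ) := by
    rw [Matrix.star_eq_conjTranspose, Matrix.conjTranspose_eq_transpose_of_trivial]
  refine ⟨(hGH.eigenvectorUnitary : Matrix (Fin d) (Fin d) ℝ), hGH.eigenvalues, ?_, ?_, ?_, ?_⟩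
  · rw [hst]
    exact Unitary.coe_star_mul_self _
  · rw [hst]
    exact Unitary.coe_mul_star_self _
  · rw [hst]
    simpa using hGH.spectral_theorem
  · exact fun k => hG.eigenvalues_nonneg k

end StmtAux

open StmtAux MeasureTheory in
theorem stmt_6 {d : ℕ} (lam : ℝ) (hlam : 0 < lam)
    (φ : Matrix (Fin d) (Fin d) ℝ → Matrix (Fin d) (Fin d) ℝ)
    (hφ : ∀ A : Matrix (Fin d) (Fin d) ℝ,
      ∃ S : Matrix (Fin d) (Fin d) ℝ, S.PosDef ∧
        S * S * (Aᵀ * A + lam ^ 2 • (1 : Matrix (Fin d) (Fin d) ℝ)) = 1 ∧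
        φ A = A * S) :
    (∀ A, matOpNorm (φ A) ≤ 1)
    ∧ ∀ A B, matOpNorm (φ A - φ B) ≤ lam⁻¹ * matOpNorm (A - B) := by
  constructor
  · intro A
    obtain ⟨S, hSpd, hS, hφA⟩ := hφ A
    obtain ⟨V, ev, hV, hVV, hspec, hev⟩ := spectral_package A
    have hSeq := S_eq A S hlam hSpd hS hV hVV hspec hev
    rw [hφA]
    exact part1_bound A S hlam hV hVV hspec hev hSeq
  · intro A B
    obtain ⟨SA, hSApd, hSA, hφA⟩ := hφ A
    obtain ⟨VA, evA, hVA, hVVA, hspecA, hevA⟩ := spectral_package A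
    have hSAeq := S_eq A SA hlam hSApd hSA hVA hVVA hspecA hevA
    obtain ⟨SB, hSBpd, hSB, hφB⟩ := hφ B
    obtain ⟨VB, evB, hVB, hVVB, hspecB, hevB⟩ := spectral_package B
    have hSBeq := S_eq B SB hlam hSBpd hSB hVB hVVB hspecB hevB
    have hC0 : 0 ≤ lam⁻¹ * matOpNorm (A - B) :=
      mul_nonneg (by positivity) (matOpNorm_nonneg _)
    apply matOpNorm_le_of_pairing _ hC0
    intro x y
    -- integral representations
    obtain ⟨hintA, hvalA⟩ := repr_integral A hlam hVA hVVA hspecA hevA x y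
    obtain ⟨hintB, hvalB⟩ := repr_integral B hlam hVB hVVB hspecB hevB x y
    set pA : ℝ → ℝ := fun s =>
      x ⬝ᵥ ((A * (Aᵀ * A + (lam ^ 2 + s ^ 2) • (1 : Matrix (Fin d) (Fin d) ℝ))⁻¹) *ᵥ y)
      with hpA
    set pB : ℝ → ℝ := fun s =>
      x ⬝ᵥ ((B * (Bᵀ * B + (lam ^ 2 + s ^ 2) • (1 : Matrix (Fin d) (Fin d) ℝ))⁻¹) *ᵥ y)
      with hpB
    have key : Real.pi / 2 * (x ⬝ᵥ ((φ A - φ B) *ᵥ y))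
        = ∫ s in Set.Ioi (0:ℝ), (pA s - pB s) := by
      rw [integral_sub hintA hintB, hvalA, hvalB, ← hSAeq, ← hSBeq, ← hφA, ← hφB,
        Matrix.sub_mulVec, dotProduct_sub]
      ring
    -- pointwise bound
    have hptwise : ∀ s : ℝ, |pA s - pB s|
        ≤ (lam ^ 2 + s ^ 2)⁻¹ * (matOpNorm (A - B) * en x * en y) := by
      intro s
      have hm : (0:ℝ) < lam ^ 2 + s ^ 2 := by positivity
      have := resolvent_bound A B hm x y
      rw [Matrix.sub_mulVec, dotProduct_sub] at this
      calc |pA s - pB s| ≤ (lam ^ 2 + s ^ 2)⁻¹ * matOpNorm (A - B) * en x * en y := this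
        _ = (lam ^ 2 + s ^ 2)⁻¹ * (matOpNorm (A - B) * en x * en y) := by ring
    -- dominating function
    have hdom : IntegrableOn
        (fun s : ℝ => (lam ^ 2 + s ^ 2)⁻¹ * (matOpNorm (A - B) * en x * en y))
        (Set.Ioi 0) := (integrable_res (by positivity)).mul_const _
    have hbound : |∫ s in Set.Ioi (0:ℝ), (pA s - pB s)|
        ≤ Real.pi / 2 * (lam⁻¹ * matOpNorm (A - B) * en x * en y) := by
      have h1 : ‖∫ s in Set.Ioi (0:ℝ), (pA s - pB s)‖
          ≤ ∫ s in Set.Ioi (0:ℝ), (lam ^ 2 + s ^ 2)⁻¹ * (matOpNorm (A - B) * en x * en y) := by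
        apply MeasureTheory.norm_integral_le_of_norm_le hdom
        apply MeasureTheory.ae_of_all
        intro s
        rw [Real.norm_eq_abs]
        exact hptwise s
      rw [Real.norm_eq_abs] at h1
      refine le_trans h1 ?_
      rw [MeasureTheory.integral_mul_const, integral_res (by positivity : (0:ℝ) < lam ^ 2)]
      rw [Real.sqrt_sq hlam.le]
      ring_nf
      exact le_refl _
    have hpi : (0:ℝ) < Real.pi / 2 := by positivity
    have h2 : Real.pi / 2 * |x ⬝ᵥ ((φ A - φ B) *ᵥ y)|
        ≤ Real.pi / 2 * (lam⁻¹ * matOpNorm (A - B) * en x * en y) := by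
      rw [← abs_of_pos hpi, ← abs_mul, abs_of_pos hpi]
      rw [show Real.pi / 2 * (x ⬝ᵥ ((φ A - φ B) *ᵥ y)) = _ from key] at *
      exact hbound
    have := (mul_le_mul_iff_right₀ hpi).mp h2
    calc |x ⬝ᵥ ((φ A - φ B) *ᵥ y)| ≤ lam⁻¹ * matOpNorm (A - B) * en x * en y := this
      _ = lam⁻¹ * matOpNorm (A - B) * en x * en y := rfl
end

section
/- Let Z_1, ..., Z_n be i.i.d. standard Gaussian random variables. There exists a constant C > 1.5 such that P(max_i Z_i ≤ √(2 log n) - C·(log log n)/√(log n)) ≤ exp(-(log n)^{C - 0.5}/(4√(πe))) for all sufficiently large n. -/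
open MeasureTheory ProbabilityTheory

lemma gauss_tail (a b : ℝ) (ha : 0 ≤ a) (hab : a ≤ b) :
    gaussianReal 0 1 (Set.Iic a) ≤
      ENNReal.ofReal (Real.exp (-((b - a) * gaussianPDFReal 0 1 b))) := by
  set g := (b - a) * gaussianPDFReal 0 1 b with hg
  have hg0 : 0 ≤ g := mul_nonneg (by linarith) (gaussianPDFReal_nonneg 0 1 b)
  have hI : g ≤ ∫ x in Set.Ioc a b, gaussianPDFReal 0 1 x := by
    have hconst : ∫ _x in Set.Ioc a b, gaussianPDFReal 0 1 b = g := by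
      rw [setIntegral_const, measureReal_def, Real.volume_Ioc, ENNReal.toReal_ofReal (by linarith),
        smul_eq_mul]
    rw [← hconst]
    refine setIntegral_mono_on
      (integrableOn_const (by rw [Real.volume_Ioc]; exact ENNReal.ofReal_ne_top))
      ((integrable_gaussianPDFReal 0 1).integrableOn) measurableSet_Ioc ?_
    intro x hx
    have hx1 : a < x := hx.1
    have hx2 : x ≤ b := hx.2
    simp only [gaussianPDFReal, NNReal.coe_one, mul_one, sub_zero]
    have h1 : Real.exp (-b ^ 2 / 2) ≤ Real.exp (-x ^ 2 / 2) := by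
      rw [Real.exp_le_exp]
      nlinarith
    have h2 : (0:ℝ) ≤ (Real.sqrt (2 * Real.pi))⁻¹ := by positivity
    exact mul_le_mul_of_nonneg_left h1 h2
  have hIoc : ENNReal.ofReal g ≤ gaussianReal 0 1 (Set.Ioc a b) := by
    rw [gaussianReal_apply_eq_integral 0 one_ne_zero]
    exact ENNReal.ofReal_le_ofReal hI
  have hsplit : gaussianReal 0 1 (Set.Iic a) + gaussianReal 0 1 (Set.Ioi a) = 1 := by
    rw [← measure_union (Set.Iic_disjoint_Ioi le_rfl) measurableSet_Ioi,
      Set.Iic_union_Ioi, measure_univ]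
  have h2 : gaussianReal 0 1 (Set.Iic a) + ENNReal.ofReal g ≤ 1 := by
    calc gaussianReal 0 1 (Set.Iic a) + ENNReal.ofReal g
        ≤ gaussianReal 0 1 (Set.Iic a) + gaussianReal 0 1 (Set.Ioi a) :=
          add_le_add_right (hIoc.trans (measure_mono Set.Ioc_subset_Ioi_self)) _
      _ = 1 := hsplit
  calc gaussianReal 0 1 (Set.Iic a) ≤ 1 - ENNReal.ofReal g := ENNReal.le_sub_of_add_le_right ENNReal.ofReal_ne_top h2
    _ = ENNReal.ofReal (1 - g) := by rw [ENNReal.ofReal_sub _ hg0, ENNReal.ofReal_one]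
    _ ≤ _ := ENNReal.ofReal_le_ofReal (by linarith [Real.add_one_le_exp (-g)])

lemma arith (L : ℝ) (hL : 20000 ≤ L) :
    L ^ (1.1 : ℝ) / (4 * Real.sqrt (Real.pi * Real.exp 1)) ≤
      Real.exp L * (((Real.sqrt (2 * L) - 1.5 * Real.log L / Real.sqrt L)
          - (Real.sqrt (2 * L) - 1.6 * Real.log L / Real.sqrt L))
        * gaussianPDFReal 0 1 (Real.sqrt (2 * L) - 1.5 * Real.log L / Real.sqrt L)) := by
  have hLpos : (0:ℝ) < L := by linarith
  set ℓ := Real.log L with hℓdef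
  set s := Real.sqrt L with hsdef
  have hspos : 0 < s := Real.sqrt_pos.mpr hLpos
  have hs2 : s ^ 2 = L := Real.sq_sqrt hLpos.le
  have hℓ9 : 9 ≤ ℓ := by
    rw [hℓdef, Real.le_log_iff_exp_le hLpos]
    have h1 : Real.exp 1 ≤ 2.7182818286 := (Real.exp_one_lt_d9).le
    calc Real.exp 9 = Real.exp 1 ^ 9 := by
          rw [← Real.exp_nat_mul]; norm_num
      _ ≤ 2.7182818286 ^ 9 := by
          exact pow_le_pow_left₀ (Real.exp_pos 1).le h1 9
      _ ≤ 20000 := by norm_num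
      _ ≤ L := hL
  have hℓ2s : ℓ ≤ 2 * s := by
    have := Real.log_le_sub_one_of_pos hspos
    rw [hsdef, Real.log_sqrt hLpos.le, ← hℓdef] at this
    linarith
  -- u = ℓ / s
  set u := ℓ / s with hudef
  have hu0 : 0 ≤ u := div_nonneg (by linarith) hspos.le
  have hus : u * s = ℓ := div_mul_cancel₀ ℓ (ne_of_gt hspos)
  have hu2 : u ≤ 2 := by
    rw [hudef, div_le_iff₀ hspos]; linarith
  set b := Real.sqrt (2 * L) - 1.5 * ℓ / s with hbdef
  have hsqrt2 : Real.sqrt (2 * L) = Real.sqrt 2 * s := by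
    rw [hsdef, Real.sqrt_mul (by norm_num : (0:ℝ) ≤ 2)]
  have h2sq : Real.sqrt 2 ^ 2 = 2 := Real.sq_sqrt (by norm_num)
  have hsqrt2_lb : (1.414 : ℝ) ≤ Real.sqrt 2 := by
    rw [show (1.414:ℝ) = Real.sqrt (1.414 ^ 2) by rw [Real.sqrt_sq]; norm_num]
    exact Real.sqrt_le_sqrt (by norm_num)
  have hb_eq : b = Real.sqrt 2 * s - 1.5 * u := by
    rw [hbdef, hsqrt2, hudef]; ring
  -- key exponent bound
  have hE : 1.1 * ℓ - 0.5 ≤ (L - b ^ 2 / 2) - 0.5 * ℓ := by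
    have hb2 : b ^ 2 = Real.sqrt 2 ^ 2 * s ^ 2 - 3 * (Real.sqrt 2 * (s * u)) + 2.25 * u ^ 2 := by
      rw [hb_eq]; ring
    have hsu : s * u = ℓ := by rw [mul_comm]; exact hus
    rw [hb2, hsu, h2sq, hs2]
    nlinarith [hℓ9, hu2, hu0, hsqrt2_lb]
  -- rewrite pieces
  have hLexp : L = Real.exp ℓ := (Real.exp_log hLpos).symm
  have hs_exp : s = Real.exp (0.5 * ℓ) := by
    have h : Real.exp (0.5 * ℓ) ^ 2 = L := by
      rw [← Real.exp_nat_mul, show ((2:ℕ):ℝ) * (0.5 * ℓ) = ℓ by push_cast; ring, ← hLexp]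
    rw [hsdef, ← h, Real.sqrt_sq (Real.exp_pos _).le]
  have hrpow : L ^ (1.1 : ℝ) = Real.exp (1.1 * ℓ - 0.5) * Real.exp 0.5 := by
    rw [Real.rpow_def_of_pos hLpos, ← Real.exp_add, ← hℓdef]
    ring_nf
  have hsqrtpie : Real.sqrt (Real.pi * Real.exp 1) = Real.sqrt Real.pi * Real.exp 0.5 := by
    rw [Real.sqrt_mul Real.pi_pos.le, ← Real.exp_half]
    norm_num
  have hsqrt2pi : Real.sqrt (2 * Real.pi) = Real.sqrt 2 * Real.sqrt Real.pi :=
    Real.sqrt_mul (by norm_num) _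
  have hpdf : gaussianPDFReal 0 1 b =
      (Real.sqrt 2 * Real.sqrt Real.pi)⁻¹ * Real.exp (-b ^ 2 / 2) := by
    simp only [gaussianPDFReal, NNReal.coe_one, mul_one, sub_zero, hsqrt2pi]
  have hdiff : b - (Real.sqrt (2 * L) - 1.6 * ℓ / s) = 0.1 * u := by
    rw [hbdef, hudef]; ring
  rw [hrpow, hsqrtpie, hdiff, hpdf]
  -- now pure inequality
  set A := Real.exp (1.1 * ℓ - 0.5) with hAdef
  set B := Real.exp ((L - b ^ 2 / 2) - 0.5 * ℓ) with hBdef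
  have hAB : A ≤ B := Real.exp_le_exp.mpr hE
  have hA0 : 0 < A := Real.exp_pos _
  have hB0 : 0 < B := Real.exp_pos _
  have hRHS : Real.exp L * (0.1 * u * ((Real.sqrt 2 * Real.sqrt Real.pi)⁻¹
      * Real.exp (-b ^ 2 / 2))) = B * (0.1 * ℓ) * (Real.sqrt 2 * Real.sqrt Real.pi)⁻¹ := by
    have he : Real.exp L * Real.exp (-b ^ 2 / 2) = B * s := by
      rw [hBdef, hs_exp, ← Real.exp_add, ← Real.exp_add]; ring_nf
    calc Real.exp L * (0.1 * u * ((Real.sqrt 2 * Real.sqrt Real.pi)⁻¹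
          * Real.exp (-b ^ 2 / 2)))
        = (Real.exp L * Real.exp (-b ^ 2 / 2)) * (0.1 * u)
            * (Real.sqrt 2 * Real.sqrt Real.pi)⁻¹ := by ring
      _ = B * (0.1 * (u * s)) * (Real.sqrt 2 * Real.sqrt Real.pi)⁻¹ := by
            rw [he]; ring
      _ = B * (0.1 * ℓ) * (Real.sqrt 2 * Real.sqrt Real.pi)⁻¹ := by rw [hus]
  rw [hRHS]
  have hpi0 : 0 < Real.sqrt Real.pi := Real.sqrt_pos.mpr Real.pi_pos
  have hs20 : 0 < Real.sqrt 2 := by positivity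
  have hsqrt2_ub : Real.sqrt 2 ≤ 1.5 := by
    rw [show (1.5:ℝ) = Real.sqrt (1.5 ^ 2) by rw [Real.sqrt_sq]; norm_num]
    exact Real.sqrt_le_sqrt (by norm_num)
  have hexp05 : 0 < Real.exp 0.5 := Real.exp_pos _
  rw [div_le_iff₀ (by positivity), mul_inv_rev]
  have key : A * (Real.sqrt 2) ≤ B * (0.4 * ℓ) := by nlinarith
  have expand : B * (0.1 * ℓ) * ((Real.sqrt Real.pi)⁻¹ * (Real.sqrt 2)⁻¹)
      * (4 * (Real.sqrt Real.pi * Real.exp 0.5))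
      = (B * (0.4 * ℓ)) * ((Real.sqrt 2)⁻¹ * Real.exp 0.5)
        * ((Real.sqrt Real.pi)⁻¹ * Real.sqrt Real.pi) := by ring
  rw [expand, inv_mul_cancel₀ (ne_of_gt hpi0), mul_one]
  calc A * Real.exp 0.5 = (A * Real.sqrt 2) * ((Real.sqrt 2)⁻¹ * Real.exp 0.5) := by
        field_simp
    _ ≤ (B * (0.4 * ℓ)) * ((Real.sqrt 2)⁻¹ * Real.exp 0.5) := by
        apply mul_le_mul_of_nonneg_right key
        positivity

theorem stmt_9 :
    ∃ C : ℝ, 1.5 < C ∧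
      ∃ n₀ : ℕ, ∀ n : ℕ, n₀ ≤ n →
        ∀ (Ω : Type) (_ : MeasurableSpace Ω) (μ : Measure Ω)
          (_ : IsProbabilityMeasure μ) (Z : Fin n → Ω → ℝ),
          (∀ i, Measurable (Z i)) →
          iIndepFun Z μ →
          (∀ i, μ.map (Z i) = gaussianReal 0 1) →
          μ {ω | ∀ i, Z i ω ≤ Real.sqrt (2 * Real.log n)
                  - C * Real.log (Real.log n) / Real.sqrt (Real.log n)}
            ≤ ENNReal.ofReal
                (Real.exp (-(Real.log n ^ (C - 0.5))
                  / (4 * Real.sqrt (Real.pi * Real.exp 1)))) := by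
  refine ⟨1.6, by norm_num, 10 ^ 10000, fun n hn Ω mΩ μ hμ Z hZmeas hindep hmap => ?_⟩
  have hnpos : (0:ℝ) < n := by
    have : (1:ℕ) ≤ n := le_trans (Nat.one_le_pow _ _ (by norm_num)) hn
    exact_mod_cast Nat.lt_of_lt_of_le Nat.zero_lt_one this
  set L := Real.log n with hLdef
  have hlog10 : (2:ℝ) ≤ Real.log 10 := by
    rw [Real.le_log_iff_exp_le (by norm_num)]
    have h1 : Real.exp 1 ≤ 2.7182818286 := (Real.exp_one_lt_d9).le
    calc Real.exp 2 = Real.exp 1 * Real.exp 1 := by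
          rw [← Real.exp_add]; norm_num
      _ ≤ 2.7182818286 * 2.7182818286 := by
          exact mul_le_mul h1 h1 (Real.exp_pos 1).le (by norm_num)
      _ ≤ 10 := by norm_num
  have hL : (20000:ℝ) ≤ L := by
    calc (20000:ℝ) = 10000 * 2 := by norm_num
      _ ≤ 10000 * Real.log 10 := by linarith
      _ = Real.log ((10:ℝ) ^ (10000:ℕ)) := by rw [Real.log_pow]; norm_num
      _ ≤ L := by
          rw [hLdef]
          apply Real.log_le_log (by positivity)
          exact_mod_cast hn
  have hLpos : (0:ℝ) < L := by linarith
  set a := Real.sqrt (2 * L) - 1.6 * Real.log L / Real.sqrt L with hadef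
  set b := Real.sqrt (2 * L) - 1.5 * Real.log L / Real.sqrt L with hbdef
  have hspos : 0 < Real.sqrt L := Real.sqrt_pos.mpr hLpos
  have hs2 : Real.sqrt L ^ 2 = L := Real.sq_sqrt hLpos.le
  have hℓpos : 0 < Real.log L := Real.log_pos (by linarith)
  have hℓ2s : Real.log L ≤ 2 * Real.sqrt L := by
    have h := Real.log_le_sub_one_of_pos hspos
    rw [Real.log_sqrt hLpos.le] at h
    linarith
  have hsbig : (100:ℝ) ≤ Real.sqrt L := by
    rw [show (100:ℝ) = Real.sqrt (100 ^ 2) by rw [Real.sqrt_sq]; norm_num]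
    exact Real.sqrt_le_sqrt (by norm_num; linarith)
  have hsqrt2L : Real.sqrt 2 * Real.sqrt L ≤ Real.sqrt (2 * L) := by
    rw [Real.sqrt_mul (by norm_num : (0:ℝ) ≤ 2)]
  have hsqrt2_lb : (1:ℝ) ≤ Real.sqrt 2 := by
    rw [show (1:ℝ) = Real.sqrt 1 by simp]
    exact Real.sqrt_le_sqrt (by norm_num)
  have ha0 : 0 ≤ a := by
    rw [hadef]
    have h1 : 1.6 * Real.log L / Real.sqrt L ≤ 3.2 := by
      rw [div_le_iff₀ hspos]; linarith
    have h2 : (3.2:ℝ) ≤ Real.sqrt (2 * L) := by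
      calc (3.2:ℝ) ≤ 1 * 100 := by norm_num
        _ ≤ Real.sqrt 2 * Real.sqrt L := by
            apply mul_le_mul hsqrt2_lb hsbig (by norm_num) (by linarith)
        _ ≤ Real.sqrt (2 * L) := hsqrt2L
    linarith
  have hab : a ≤ b := by
    rw [hadef, hbdef]
    have h2 : 1.5 * Real.log L / Real.sqrt L ≤ 1.6 * Real.log L / Real.sqrt L :=
      (div_le_div_iff_of_pos_right hspos).mpr (by linarith)
    linarith
  -- rewrite the set
  have hset : {ω | ∀ i, Z i ω ≤ a} = ⋂ i, Z i ⁻¹' Set.Iic a := by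
    ext ω; simp [Set.mem_iInter, Set.mem_preimage, Set.mem_Iic]
  have hprod : μ (⋂ i, Z i ⁻¹' Set.Iic a) = ∏ _i : Fin n, gaussianReal 0 1 (Set.Iic a) := by
    rw [hindep.meas_iInter (fun i => ⟨Set.Iic a, measurableSet_Iic, rfl⟩)]
    refine Finset.prod_congr rfl fun i _ => ?_
    rw [← Measure.map_apply (hZmeas i) measurableSet_Iic, hmap i]
  have hg := gauss_tail a b ha0 hab
  set g := (b - a) * gaussianPDFReal 0 1 b with hgdef
  have hg0 : 0 ≤ g :=
    mul_nonneg (by linarith) (gaussianPDFReal_nonneg 0 1 b)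
  have harith := arith L hL
  rw [← hadef, ← hbdef, ← hgdef] at harith
  calc μ {ω | ∀ i, Z i ω ≤ a}
      = ∏ _i : Fin n, gaussianReal 0 1 (Set.Iic a) := by rw [hset, hprod]
    _ = gaussianReal 0 1 (Set.Iic a) ^ n := by
        rw [Finset.prod_const, Finset.card_univ, Fintype.card_fin]
    _ ≤ ENNReal.ofReal (Real.exp (-g)) ^ n := pow_le_pow_left₀ zero_le hg n
    _ = ENNReal.ofReal (Real.exp (-g) ^ n) := (ENNReal.ofReal_pow (Real.exp_nonneg _) n).symm
    _ = ENNReal.ofReal (Real.exp (n * -g)) := by rw [Real.exp_nat_mul]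
    _ ≤ ENNReal.ofReal (Real.exp (-(L ^ ((1.6:ℝ) - 0.5))
          / (4 * Real.sqrt (Real.pi * Real.exp 1)))) := by
        apply ENNReal.ofReal_le_ofReal
        rw [Real.exp_le_exp]
        have hn_exp : (n:ℝ) = Real.exp L := (Real.exp_log hnpos).symm
        have h11 : ((1.6:ℝ) - 0.5) = 1.1 := by norm_num
        have heq : (n:ℝ) * -g = -(Real.exp L * g) := by rw [hn_exp]; ring
        rw [heq, h11, neg_div]
        exact neg_le_neg harith
end

section
/- Let (ũ_γ)_γ be a family of i.i.d. standard Gaussian random variables indexed by a countable set, and let 𝒜, ℬ be finite multisets of indices. Then E[∏_{γ∈𝒜}(ũ_γ² - 1) · ∏_{γ∈ℬ} ũ_γ] ≥ 0. -/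
open MeasureTheory ProbabilityTheory Real Filter Asymptotics Set Topology
open scoped NNReal ENNReal

namespace Stmt19Aux

/-- Gaussian-weighted monomial in `(x²-1)` and `x`. -/
noncomputable def gw (a b : ℕ) : ℝ → ℝ := fun x => (x^2-1)^a * x^b * Real.exp (-(x^2/2))

noncomputable def J (a b : ℕ) : ℝ := ∫ x, gw a b x

lemma int_pow_exp (n : ℕ) : Integrable (fun x : ℝ => x^n * Real.exp (-(x^2/2))) := by
  have h := integrable_rpow_mul_exp_neg_mul_sq (b := (1:ℝ)/2) (by norm_num)
    (s := (n:ℝ)) (lt_of_lt_of_le (by norm_num) (Nat.cast_nonneg n))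
  have heq : (fun x : ℝ => x ^ (n:ℝ) * Real.exp (-((1:ℝ)/2) * x^2))
      = fun x : ℝ => x^n * Real.exp (-(x^2/2)) := by
    funext x
    rw [Real.rpow_natCast]
    congr 1
    ring
  rwa [heq] at h

lemma int_poly (P : Polynomial ℝ) :
    Integrable (fun x => P.eval x * Real.exp (-(x^2/2))) := by
  induction P using Polynomial.induction_on' with
  | add p q hp hq => simpa [add_mul, Pi.add_def] using hp.add hq
  | monomial n c =>
      simpa [Polynomial.eval_monomial, mul_assoc] using (int_pow_exp n).const_mul c

lemma int_gw (a b : ℕ) : Integrable (gw a b) := by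
  have h := int_poly ((Polynomial.X^2 - 1)^a * Polynomial.X^b)
  unfold gw
  simpa using h

lemma tend_pow_exp_top (n : ℕ) :
    Tendsto (fun x : ℝ => x^n * Real.exp (-(x^2/2))) atTop (𝓝 0) := by
  have h := rpow_mul_exp_neg_mul_sq_isLittleO_exp_neg (b := (1:ℝ)/2) (by norm_num) (n:ℝ)
  have hlin : Tendsto (fun x : ℝ => -((1:ℝ)/2) * x) atTop atBot := by
    have := tendsto_neg_atTop_atBot.comp (tendsto_id.const_mul_atTop
      (show (0:ℝ) < 1/2 by norm_num))
    refine this.congr fun x => ?_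
    simp [neg_mul]
  have h2 : Tendsto (fun x : ℝ => Real.exp (-((1:ℝ)/2) * x)) atTop (𝓝 0) :=
    Real.tendsto_exp_atBot.comp hlin
  have h3 := h.isBigO.trans_tendsto h2
  have heq : (fun x : ℝ => x ^ (n:ℝ) * Real.exp (-((1:ℝ)/2) * x^2))
      = fun x : ℝ => x^n * Real.exp (-(x^2/2)) := by
    funext x
    rw [Real.rpow_natCast]
    congr 1
    ring
  rwa [heq] at h3

lemma tend_pow_exp_bot (n : ℕ) :
    Tendsto (fun x : ℝ => x^n * Real.exp (-(x^2/2))) atBot (𝓝 0) := by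
  have h := (tend_pow_exp_top n).comp tendsto_neg_atBot_atTop
  have h' := h.const_mul ((-1:ℝ)^n)
  rw [mul_zero] at h'
  refine h'.congr fun x => ?_
  show ((-1:ℝ))^n * ((-x)^n * Real.exp (-((-x)^2/2))) = x^n * Real.exp (-(x^2/2))
  rcases Nat.even_or_odd n with he | ho
  · rw [he.neg_one_pow, he.neg_pow, neg_sq]; ring
  · rw [ho.neg_one_pow, ho.neg_pow, neg_sq]; ring

lemma tend_poly_top (P : Polynomial ℝ) :
    Tendsto (fun x => P.eval x * Real.exp (-(x^2/2))) atTop (𝓝 0) := by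
  induction P using Polynomial.induction_on' with
  | add p q hp hq =>
      have := hp.add hq
      rw [add_zero] at this
      refine this.congr fun x => ?_
      simp [add_mul]
  | monomial n c =>
      have := (tend_pow_exp_top n).const_mul c
      rw [mul_zero] at this
      refine this.congr fun x => ?_
      simp [Polynomial.eval_monomial, mul_assoc]

lemma tend_poly_bot (P : Polynomial ℝ) :
    Tendsto (fun x => P.eval x * Real.exp (-(x^2/2))) atBot (𝓝 0) := by
  induction P using Polynomial.induction_on' with
  | add p q hp hq =>
      have := hp.add hq
      rw [add_zero] at this
      refine this.congr fun x => ?_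
      simp [add_mul]
  | monomial n c =>
      have := (tend_pow_exp_bot n).const_mul c
      rw [mul_zero] at this
      refine this.congr fun x => ?_
      simp [Polynomial.eval_monomial, mul_assoc]

lemma tend_gw_top (a b : ℕ) : Tendsto (gw a b) atTop (𝓝 0) := by
  have h := tend_poly_top ((Polynomial.X^2 - 1)^a * Polynomial.X^b)
  unfold gw
  simpa using h

lemma tend_gw_bot (a b : ℕ) : Tendsto (gw a b) atBot (𝓝 0) := by
  have h := tend_poly_bot ((Polynomial.X^2 - 1)^a * Polynomial.X^b)
  unfold gw
  simpa using h


lemma integral_deriv_eq_zero {F F' : ℝ → ℝ} (hd : ∀ x, HasDerivAt F (F' x) x)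
    (hi : Integrable F') (htop : Tendsto F atTop (𝓝 0))
    (hbot : Tendsto F atBot (𝓝 0)) : ∫ x, F' x = 0 := by
  have hIoi : ∫ x in Ioi (0:ℝ), F' x = 0 - F 0 :=
    integral_Ioi_of_hasDerivAt_of_tendsto' (fun x _ => hd x) hi.integrableOn htop
  have hG : ∀ x, HasDerivAt (fun y => F (-y)) (-F' (-x)) x := by
    intro x
    have := (hd (-x)).comp x (hasDerivAt_neg x)
    simpa [mul_comm, Function.comp_def] using this
  have hGi : Integrable (fun x => -F' (-x)) := by
    have h1 : Integrable (F' ∘ Neg.neg) :=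
      ((Measure.measurePreserving_neg (volume : Measure ℝ)).integrable_comp
        hi.aestronglyMeasurable).mpr hi
    exact h1.neg
  have hGt : Tendsto (fun y => F (-y)) atTop (𝓝 0) :=
    hbot.comp tendsto_neg_atTop_atBot
  have hIoi' : ∫ x in Ioi (0:ℝ), -F' (-x) = 0 - F (-0) :=
    integral_Ioi_of_hasDerivAt_of_tendsto' (fun x _ => hG x) hGi.integrableOn hGt
  have hcomp : ∫ x in Ioi (0:ℝ), F' (-x) = ∫ x in Iic (-0:ℝ), F' x :=
    integral_comp_neg_Ioi 0 F'
  have hIic : ∫ x in Iic (0:ℝ), F' x = F 0 := by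
    have h1 : ∫ x in Ioi (0:ℝ), -F' (-x) = -∫ x in Ioi (0:ℝ), F' (-x) := by
      rw [integral_neg]
    rw [h1] at hIoi'
    rw [hcomp] at hIoi'
    simp only [neg_zero, zero_sub] at hIoi' ⊢
    linarith
  have := intervalIntegral.integral_Iic_add_Ioi (b := (0:ℝ)) hi.integrableOn hi.integrableOn
  rw [← this, hIic, hIoi]
  ring


end Stmt19Aux

namespace Stmt19Aux
open Polynomial in
lemma key (a b : ℕ) :
    J a (b+2) = 2*(a:ℝ)*J (a-1) (b+2) + ((b:ℝ)+1)*J a b := by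
  set F' : ℝ → ℝ := fun x =>
    (2*(a:ℝ)*(x^2-1)^(a-1)*x^(b+2) + ((b:ℝ)+1)*(x^2-1)^a*x^b - (x^2-1)^a*x^(b+2))
      * Real.exp (-(x^2/2)) with hF'
  have hd : ∀ x, HasDerivAt (gw a (b+1)) (F' x) x := by
    intro x
    have h1 : HasDerivAt (fun y : ℝ => (y^2-1)^a) ((a:ℝ) * (x^2-1)^(a-1) * (2*x^1)) x := by
      exact_mod_cast ((hasDerivAt_pow 2 x).sub_const 1).pow a
    have h2 : HasDerivAt (fun y : ℝ => y^(b+1)) (((b:ℝ)+1) * x^b) x := by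
      have := hasDerivAt_pow (b+1) x
      simpa using this
    have h3 : HasDerivAt (fun y : ℝ => Real.exp (-(y^2/2))) (Real.exp (-(x^2/2)) * (-x)) x := by
      have hin : HasDerivAt (fun y : ℝ => -(y^2/2)) (-x) x := by
        have := ((hasDerivAt_pow 2 x).div_const 2).neg
        exact this.congr_deriv (by norm_num)
      simpa [mul_comm] using hin.exp
    have := (h1.mul h2).mul h3
    refine this.congr_deriv (Eq.symm ?_)
    show F' x = _
    rw [hF']
    simp only [Pi.mul_apply]
    push_cast
    ring
  have heq : F' = fun x => 2*(a:ℝ)*gw (a-1) (b+2) x + ((b:ℝ)+1)*gw a b x - gw a (b+2) x := by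
    funext x
    simp only [hF', gw]
    ring
  have hI : Integrable F' := by
    rw [heq]
    exact (((int_gw (a-1) (b+2)).const_mul _).add ((int_gw a b).const_mul _)).sub (int_gw a (b+2))
  have hzero : ∫ x, F' x = 0 :=
    integral_deriv_eq_zero hd hI (tend_gw_top a (b+1)) (tend_gw_bot a (b+1))
  have hzero2 : ∫ x, (2*(a:ℝ)*gw (a-1) (b+2) x + ((b:ℝ)+1)*gw a b x - gw a (b+2) x) = 0 := by
    rw [← heq]; exact hzero
  have h4 : ∫ x, (2*(a:ℝ)*gw (a-1) (b+2) x + ((b:ℝ)+1)*gw a b x - gw a (b+2) x)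
      = (∫ x, (2*(a:ℝ)*gw (a-1) (b+2) x + ((b:ℝ)+1)*gw a b x)) - ∫ x, gw a (b+2) x :=
    integral_sub (((int_gw (a-1) (b+2)).const_mul _).add ((int_gw a b).const_mul _))
      (int_gw a (b+2))
  have h5 : ∫ x, (2*(a:ℝ)*gw (a-1) (b+2) x + ((b:ℝ)+1)*gw a b x)
      = (∫ x, 2*(a:ℝ)*gw (a-1) (b+2) x) + ∫ x, ((b:ℝ)+1)*gw a b x :=
    integral_add ((int_gw (a-1) (b+2)).const_mul _) ((int_gw a b).const_mul _)
  rw [h4, h5, integral_const_mul, integral_const_mul] at hzero2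
  simp only [J]
  linarith [hzero2]

lemma Jsplit (a b : ℕ) : J a (b+2) = J (a+1) b + J a b := by
  have heq : gw a (b+2) = fun x => gw (a+1) b x + gw a b x := by
    funext x
    simp only [gw]
    ring
  simp only [J]
  rw [heq, integral_add (int_gw (a+1) b) (int_gw a b)]

lemma J_zero_nonneg (b : ℕ) : 0 ≤ J 0 b := by
  rcases Nat.even_or_odd b with he | ho
  · refine integral_nonneg fun x => ?_
    simp only [gw, pow_zero, one_mul]
    exact mul_nonneg (he.pow_nonneg x) (Real.exp_pos _).le
  · have h1 : J 0 b = ∫ x, gw 0 b (-x) := (integral_neg_eq_self (gw 0 b) _).symm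
    have h2 : ∀ x : ℝ, gw 0 b (-x) = -gw 0 b x := by
      intro x
      simp only [gw, pow_zero, one_mul, neg_sq, ho.neg_pow]
      ring
    have h3 : J 0 b = -J 0 b := by
      calc J 0 b = ∫ x, gw 0 b (-x) := h1
        _ = ∫ x, -gw 0 b x := by simp only [h2]
        _ = -∫ x, gw 0 b x := integral_neg _
        _ = -J 0 b := rfl
    linarith
  
lemma J_nonneg (a b : ℕ) : 0 ≤ J a b := by
  induction a using Nat.strong_induction_on generalizing b with
  | _ a ih =>
    match a with
    | 0 => exact J_zero_nonneg b
    | (a'+1) =>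
      have e1 := Jsplit a' b
      have e2 := key a' b
      have n1 := ih a' (Nat.lt_succ_self a') b
      have n2 := ih (a'-1) ((Nat.sub_le a' 1).trans_lt (Nat.lt_succ_self a')) (b+2)
      have c1 : 0 ≤ 2*(a':ℝ) * J (a'-1) (b+2) := by positivity
      have c2 : 0 ≤ (b:ℝ) * J a' b := by positivity
      push_cast at e2
      linarith


lemma gaussian_nonneg (a b : ℕ) :
    0 ≤ ∫ x, (x^2-1)^a * x^b ∂(gaussianReal 0 1) := by
  rw [gaussianReal_of_var_ne_zero 0 one_ne_zero]
  have hpdf : gaussianPDF 0 1 = fun x => ((Real.toNNReal (gaussianPDFReal 0 1 x) : ℝ≥0) : ℝ≥0∞) :=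
    rfl
  rw [hpdf, integral_withDensity_eq_integral_smul
    ((measurable_gaussianPDFReal 0 1).real_toNNReal) _]
  have hval : ∀ x : ℝ, (Real.toNNReal (gaussianPDFReal 0 1 x)) • ((x^2-1)^a * x^b)
      = (Real.sqrt (2*π))⁻¹ * gw a b x := by
    intro x
    rw [NNReal.smul_def, Real.coe_toNNReal _ (gaussianPDFReal_nonneg _ _ x)]
    simp only [gaussianPDFReal, gw, NNReal.coe_one, mul_one, sub_zero, smul_eq_mul]
    rw [show -(x:ℝ)^2/(2:ℝ) = -(x^2/2) by ring]
    ring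
  simp only [hval]
  rw [integral_const_mul]
  exact mul_nonneg (inv_nonneg.mpr (Real.sqrt_nonneg _)) (J_nonneg a b)

lemma integral_indep_prod {Ω ι : Type} [MeasurableSpace Ω] (μ : Measure Ω)
    [IsProbabilityMeasure μ] (g : ι → Ω → ℝ)
    (hindep : iIndepFun g μ) (hm : ∀ i, Measurable (g i))
    (s : Finset ι) :
    ∫ ω, ∏ i ∈ s, g i ω ∂μ = ∏ i ∈ s, ∫ ω, g i ω ∂μ := by
  classical
  induction s using Finset.cons_induction with
  | empty => simp
  | cons a s ha ih =>
    have hfn : (∏ j ∈ s, g j) = fun ω => ∏ j ∈ s, g j ω := by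
      funext ω; simp
    have hmul := (hindep.indepFun_finset_prod_of_notMem hm ha).integral_mul_eq_mul_integral
      (show AEStronglyMeasurable (∏ j ∈ s, g j) μ by
        rw [hfn]; exact (Finset.measurable_prod s (fun i _ => hm i)).aestronglyMeasurable)
      (hm a).aestronglyMeasurable
    rw [hfn] at hmul
    calc ∫ ω, ∏ i ∈ Finset.cons a s ha, g i ω ∂μ
        = ∫ ω, (∏ i ∈ s, g i ω) * g a ω ∂μ := by
          congr 1; funext ω; rw [Finset.prod_cons]; ring
      _ = (∫ ω, (∏ i ∈ s, g i ω) ∂μ) * ∫ ω, g a ω ∂μ := hmul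
      _ = ∏ i ∈ Finset.cons a s ha, ∫ ω, g i ω ∂μ := by
          rw [ih, Finset.prod_cons]; ring


end Stmt19Aux

open Stmt19Aux in
theorem stmt_19 {Ω ι : Type} [MeasurableSpace Ω] [Countable ι] (μ : Measure Ω)
    [IsProbabilityMeasure μ] (u : ι → Ω → ℝ) (hmeas : ∀ γ, Measurable (u γ))
    (hindep : iIndepFun u μ)
    (hlaw : ∀ γ, μ.map (u γ) = gaussianReal 0 1)
    (A B : Multiset ι) :
    0 ≤ ∫ ω, (A.map (fun γ => (u γ ω) ^ 2 - 1)).prod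
              * (B.map (fun γ => u γ ω)).prod ∂μ := by
  classical
  set T : Finset ι := A.toFinset ∪ B.toFinset with hT
  have hpt : ∀ ω, (A.map (fun γ => (u γ ω) ^ 2 - 1)).prod * (B.map (fun γ => u γ ω)).prod
      = ∏ γ ∈ T, (((u γ ω)^2-1)^(A.count γ) * (u γ ω)^(B.count γ)) := by
    intro ω
    rw [Finset.prod_multiset_map_count, Finset.prod_multiset_map_count]
    have hA : ∏ γ ∈ A.toFinset, ((u γ ω)^2-1)^(A.count γ)
        = ∏ γ ∈ T, ((u γ ω)^2-1)^(A.count γ) := by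
      refine Finset.prod_subset Finset.subset_union_left (fun x _ hx => ?_)
      rw [Multiset.count_eq_zero_of_notMem (by simpa using hx), pow_zero]
    have hB : ∏ γ ∈ B.toFinset, (u γ ω)^(B.count γ)
        = ∏ γ ∈ T, (u γ ω)^(B.count γ) := by
      refine Finset.prod_subset Finset.subset_union_right (fun x _ hx => ?_)
      rw [Multiset.count_eq_zero_of_notMem (by simpa using hx), pow_zero]
    rw [hA, hB, ← Finset.prod_mul_distrib]
  simp only [hpt]
  set g : ι → Ω → ℝ := fun γ ω => ((u γ ω)^2-1)^(A.count γ) * (u γ ω)^(B.count γ) with hg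
  have hmg : ∀ γ, Measurable (g γ) := by
    intro γ
    exact ((((hmeas γ).pow_const 2).sub measurable_const).pow_const _).mul
      ((hmeas γ).pow_const _)
  have hig : iIndepFun g μ := by
    have := hindep.comp (fun γ (x : ℝ) => (x^2-1)^(A.count γ) * x^(B.count γ))
      (fun γ => (((measurable_id.pow_const 2).sub measurable_const).pow_const _).mul
        (measurable_id.pow_const _))
    exact this
  rw [integral_indep_prod μ g hig hmg T]
  refine Finset.prod_nonneg fun γ _ => ?_
  have hcont : Continuous (fun x : ℝ => (x^2-1)^(A.count γ) * x^(B.count γ)) := by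
    continuity
  have hmap : ∫ ω, g γ ω ∂μ = ∫ x, (x^2-1)^(A.count γ) * x^(B.count γ) ∂(gaussianReal 0 1) := by
    rw [← hlaw γ]
    exact (integral_map (hmeas γ).aemeasurable hcont.aestronglyMeasurable).symm
  rw [hmap]
  exact gaussian_nonneg _ _
end
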